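/- Let σ be a row-strict tableau of shape λ ⊢ n, and define I_σ ⊔ J_σ ⊔ K_σ as the partition of {1,…,n−1} where i ∈ J_σ iff i+1 is in the same row as i (directly adjacent conditions as in the paper), and I_σ, K_σ defined accordingly. Suppose K_σ ⊔ I_σ = {n_1 < n_2 < ⋯ < n_r}. Then the maximal divisor d_σ of σ equals gcd(n_1, n_2, …, n_r, n). -/

import Mathlib

open scoped Classical

/-- The set of boxes (row, column), 0-indexed, of the Young diagram of a partition given
as a list of row lengths. -/
def cells (L : List ℕ) : Set (ℕ × ℕ) := {p | p.1 < L.length ∧ p.2 < L.getD p.1 0}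

/-- `pos` encodes a tableau of shape `L` with entries `1, …, n`:  `pos i` is the (row,
column) of the box labeled `i`.  It is injective on `{1,…,n}` with image the set of
boxes, and is normalized to `(0,0)` outside `{1,…,n}`. -/
def IsTab (L : List ℕ) (n : ℕ) (pos : ℕ → ℕ × ℕ) : Prop :=
  Set.InjOn pos (Set.Icc 1 n) ∧ pos '' Set.Icc 1 n = cells L ∧
    ∀ i, i ∉ Set.Icc 1 n → pos i = (0, 0)

/-- Row-strictness: entries increase along each row (left to right). -/
def RowStrict (n : ℕ) (pos : ℕ → ℕ × ℕ) : Prop :=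
  ∀ i j, i ∈ Set.Icc 1 n → j ∈ Set.Icc 1 n →
    (pos j).1 = (pos i).1 → (pos j).2 = (pos i).2 + 1 → i < j

/-- A row-strict tableau of shape `L` with entries `1, …, n`. -/
def IsRST (L : List ℕ) (n : ℕ) (pos : ℕ → ℕ × ℕ) : Prop :=
  IsTab L n pos ∧ RowStrict n pos

/-- `(i, j)` with `i > j` is a Springer pair: `i` lies in the same column as `j` or in a
column strictly to its left, and if the box directly right of `j` is labeled `r` then
`i < r`. -/
def SpringerPair (n : ℕ) (pos : ℕ → ℕ × ℕ) (i j : ℕ) : Prop :=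
  1 ≤ j ∧ j < i ∧ i ≤ n ∧ (pos i).2 ≤ (pos j).2 ∧
    ∀ r ∈ Set.Icc 1 n, pos r = ((pos j).1, (pos j).2 + 1) → i < r

/-- A Springer inversion is a Springer pair `(i, j)` such that if `i` is in the same
column as `j` then `i` lies strictly below `j`. -/
def SpringerInv (n : ℕ) (pos : ℕ → ℕ × ℕ) (i j : ℕ) : Prop :=
  SpringerPair n pos i j ∧ ((pos i).2 = (pos j).2 → (pos j).1 < (pos i).1)

/-- The number of Springer pairs of a tableau. -/
noncomputable def pairsCount (n : ℕ) (pos : ℕ → ℕ × ℕ) : ℕ :=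
  {p : ℕ × ℕ | SpringerPair n pos p.1 p.2}.ncard

/-- The number of Springer inversions of a tableau. -/
noncomputable def invCount (n : ℕ) (pos : ℕ → ℕ × ℕ) : ℕ :=
  {p : ℕ × ℕ | SpringerInv n pos p.1 p.2}.ncard

/-- `d` is a divisor of the tableau: `d ∣ n` and the tableau decomposes into blocks of
`d` consecutive boxes with consecutive labels, i.e. whenever `d ∤ i` the box labeled
`i + 1` is directly to the right of the box labeled `i`. -/
def TabDivisor (n d : ℕ) (pos : ℕ → ℕ × ℕ) : Prop :=
  d ∣ n ∧ ∀ i, 1 ≤ i → i < n → ¬ d ∣ i → pos (i + 1) = ((pos i).1, (pos i).2 + 1)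

/-- The quotient tableau `σ/d`: each block of `d` boxes is merged into a single box,
labeled in the same relative order (the block containing `d·m` gets label `m`). -/
def quotTab (d : ℕ) (pos : ℕ → ℕ × ℕ) : ℕ → ℕ × ℕ :=
  fun m => ((pos (d * m)).1, ((pos (d * m)).2 + 1) / d - 1)

/-- `Σ_i (i−1)·λ_i`, the dimension of the Springer fiber of Jordan type `λ`. -/
def dimB (L : List ℕ) : ℕ := ∑ i ∈ Finset.range L.length, i * L.getD i 0

/-- `L` is a partition of `n`: weakly decreasing positive parts summing to `n`. -/
def IsPartition (L : List ℕ) (n : ℕ) : Prop :=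
  L.sum = n ∧ L.Pairwise (· ≥ ·) ∧ ∀ x ∈ L, 0 < x

/-- The maximal divisor `d_σ` of a row-strict tableau `σ` equals
`gcd(n_1, …, n_r, n)`, where `{n_1, …, n_r} = K_σ ⊔ I_σ` is the set of `i ∈ {1,…,n−1}`
such that `i+1` is *not* directly to the right of `i` (the complement of `J_σ`). -/
theorem stmt8 (L : List ℕ) (n : ℕ) (hL : IsPartition L n) (hn : 0 < n)
    (σ : ℕ → ℕ × ℕ) (hσ : IsRST L n σ) :
    IsGreatest {d : ℕ | 0 < d ∧ TabDivisor n d σ}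
      ((insert n ((Finset.Ico 1 n).filter
        (fun i => σ (i + 1) ≠ ((σ i).1, (σ i).2 + 1)))).gcd id) := by
  set S := (Finset.Ico 1 n).filter (fun i => σ (i + 1) ≠ ((σ i).1, (σ i).2 + 1)) with hS
  set g := (insert n S).gcd id with hg
  have hgn : g ∣ n := Finset.gcd_dvd (Finset.mem_insert_self _ _)
  have hgS : ∀ i ∈ S, g ∣ i := fun i hi =>
    Finset.gcd_dvd (Finset.mem_insert_of_mem hi)
  have hgpos : 0 < g := by
    rcases Nat.eq_zero_or_pos g with h | h
    · exfalso
      have := Finset.gcd_eq_zero_iff.mp (hg ▸ h) n (Finset.mem_insert_self _ _)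
      simp at this; omega
    · exact h
  constructor
  · refine ⟨hgpos, hgn, fun i h1 h2 hnd => ?_⟩
    by_contra hne
    exact hnd (hgS i (Finset.mem_filter.mpr ⟨Finset.mem_Ico.mpr ⟨h1, h2⟩, hne⟩))
  · rintro d ⟨hd, hdn, hdiv⟩
    have hdg : d ∣ g := by
      apply Finset.dvd_gcd
      intro b hb
      rcases Finset.mem_insert.mp hb with rfl | hb
      · exact hdn
      · rcases Finset.mem_filter.mp hb with ⟨hb1, hb2⟩
        rcases Finset.mem_Ico.mp hb1 with ⟨h1, h2⟩
        by_contra hnd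
        exact hb2 (hdiv b h1 h2 hnd)
    exact Nat.le_of_dvd hgpos hdg
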